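/- Let (P,w) be a normalized weighted set of n points in R^d, ε ∈ (0,1), and suppose u ∈ [0,∞)^n satisfies: u' defined by u'_i = u_i‖(p_i,1)‖²/2 is a distribution vector, and ‖Σ_i (w'_i − u'_i) p'_i‖ ≤ ε/4 where p'_i = (p_i,1)/‖(p_i,1)‖², w'_i = w_i‖(p_i,1)‖²/2. Then for every x ∈ R^d, |Σ_i (w_i − u_i)‖p_i − x‖²| ≤ ε Σ_i w_i ‖p_i − x‖². -/

import Mathlib

open scoped BigOperators

set_option maxHeartbeats 1000000 in
theorem stmt9 {d n : ℕ} (p : Fin n → EuclideanSpace ℝ (Fin d)) (w u u' : Fin n → ℝ)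
    (hw1 : ∑ i, w i = 1) (hw2 : ∑ i, w i • p i = 0) (hw3 : ∑ i, w i * ‖p i‖ ^ 2 = 1)
    (ε : ℝ) (hε : ε ∈ Set.Ioo (0 : ℝ) 1)
    (hu0 : ∀ i, 0 ≤ u i)
    (lift : Fin n → WithLp 2 (EuclideanSpace ℝ (Fin d) × ℝ))
    (hlift : ∀ i, lift i = (WithLp.equiv 2 (EuclideanSpace ℝ (Fin d) × ℝ)).symm (p i, 1))
    (p' : Fin n → WithLp 2 (EuclideanSpace ℝ (Fin d) × ℝ))
    (hp' : ∀ i, p' i = (‖lift i‖ ^ 2)⁻¹ • lift i)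
    (w' : Fin n → ℝ) (hw' : ∀ i, w' i = w i * ‖lift i‖ ^ 2 / 2)
    (hu' : ∀ i, u' i = u i * ‖lift i‖ ^ 2 / 2)
    (hu'dist : ∑ i, u' i = 1)
    (hclose : ‖∑ i, (w' i - u' i) • p' i‖ ≤ ε / 4) :
    ∀ x : EuclideanSpace ℝ (Fin d),
      |∑ i, (w i - u i) * ‖p i - x‖ ^ 2| ≤ ε * ∑ i, w i * ‖p i - x‖ ^ 2 := by
  intro x
  obtain ⟨hε0, hε1⟩ := hε
  -- norm of lift
  have hL : ∀ i, ‖lift i‖ ^ 2 = ‖p i‖ ^ 2 + 1 := by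
    intro i
    rw [hlift, WithLp.prod_norm_sq_eq_of_L2]
    simp
  have hLpos : ∀ i, (0:ℝ) < ‖lift i‖ ^ 2 := by
    intro i; rw [hL i]; positivity
  set c : Fin n → ℝ := fun i => (w i - u i) / 2 with hc
  have key : ∀ i, (w' i - u' i) • p' i = c i • lift i := by
    intro i
    have hne : (‖lift i‖ ^ 2 : ℝ) ≠ 0 := (hLpos i).ne'
    rw [hp', hw', hu', smul_smul, hc]
    congr 1
    have hne1 : ‖lift i‖ ≠ 0 := fun h => hne (by rw [h]; ring)
    field_simp
  set S : WithLp 2 (EuclideanSpace ℝ (Fin d) × ℝ) := ∑ i, c i • lift i with hS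
  have hSclose : ‖S‖ ≤ ε / 4 := by
    rw [hS, ← Finset.sum_congr rfl (fun i _ => key i)]
    exact hclose
  -- components of S
  set Sp : EuclideanSpace ℝ (Fin d) := ∑ i, c i • p i with hSp
  set T : ℝ := ∑ i, c i with hT
  have hSfst : S.fst = Sp := by
    rw [hS, hSp]
    have : (∑ i, c i • lift i).fst = ∑ i, (c i • lift i).fst := by
      exact map_sum (WithLp.fstₗ 2 ℝ (EuclideanSpace ℝ (Fin d)) ℝ) _ _
    rw [this]
    refine Finset.sum_congr rfl fun i _ => ?_
    rw [hlift]
    rfl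
  have hSsnd : S.snd = T := by
    rw [hS, hT]
    have : (∑ i, c i • lift i).snd = ∑ i, (c i • lift i).snd := by
      exact map_sum (WithLp.sndₗ 2 ℝ (EuclideanSpace ℝ (Fin d)) ℝ) _ _
    rw [this]
    refine Finset.sum_congr rfl fun i _ => ?_
    rw [hlift]
    show c i • (1:ℝ) = c i
    simp
  have hnormS : ‖S‖ ^ 2 = ‖Sp‖ ^ 2 + T ^ 2 := by
    rw [WithLp.prod_norm_sq_eq_of_L2, hSfst, hSsnd, Real.norm_eq_abs, sq_abs]
  have hSnn : (0:ℝ) ≤ ‖S‖ := norm_nonneg _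
  have hS2 : ‖Sp‖ ^ 2 + T ^ 2 ≤ (ε/4) ^ 2 := by
    rw [← hnormS]
    exact pow_le_pow_left₀ hSnn hSclose 2
  have hSpb : ‖Sp‖ ≤ ε / 4 := by
    nlinarith [norm_nonneg Sp, sq_nonneg T]
  have hTb : |T| ≤ ε / 4 := by
    rw [abs_le]; constructor <;> nlinarith [norm_nonneg Sp, sq_nonneg (‖Sp‖)]
  -- sums identities
  have hu2 : ∑ i, u i * ‖p i‖ ^ 2 + ∑ i, u i = 2 := by
    have : ∑ i, u' i = ∑ i, (u i * ‖p i‖ ^ 2 + u i) / 2 := by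
      refine Finset.sum_congr rfl fun i _ => ?_
      rw [hu', hL]; ring
    rw [this, ← Finset.sum_div, Finset.sum_add_distrib] at hu'dist
    linarith
  have hTsum : ∑ i, (w i - u i) = 2 * T := by
    rw [hT, hc, ← Finset.sum_div]
    ring
  have hAsum : ∑ i, (w i - u i) * ‖p i‖ ^ 2 = -(2 * T) := by
    have h1 : ∑ i, (w i - u i) * ‖p i‖ ^ 2
        = ∑ i, w i * ‖p i‖ ^ 2 - ∑ i, u i * ‖p i‖ ^ 2 := by
      rw [← Finset.sum_sub_distrib]
      exact Finset.sum_congr rfl fun i _ => by ring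
    have h2 : ∑ i, (w i - u i) = ∑ i, w i - ∑ i, u i := Finset.sum_sub_distrib _ _
    rw [hTsum] at h2
    rw [h1]
    linarith
  -- inner product of sum
  have hinner : ∀ (v : Fin n → ℝ), (inner ℝ (∑ i, v i • p i) x : ℝ)
      = ∑ i, v i * (inner ℝ (p i) x : ℝ) := by
    intro v
    rw [sum_inner]
    exact Finset.sum_congr rfl fun i _ => real_inner_smul_left _ _ _
  have hSpinner : (inner ℝ Sp x : ℝ) = ∑ i, c i * (inner ℝ (p i) x : ℝ) := hinner c
  have hwinner : ∑ i, w i * (inner ℝ (p i) x : ℝ) = 0 := by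
    rw [← hinner w, hw2, inner_zero_left]
  -- expand norms
  have hexp : ∀ i, ‖p i - x‖ ^ 2 = ‖p i‖ ^ 2 - 2 * (inner ℝ (p i) x : ℝ) + ‖x‖ ^ 2 := by
    intro i; rw [@norm_sub_sq_real]
  -- LHS expansion
  have hLHS : ∑ i, (w i - u i) * ‖p i - x‖ ^ 2
      = -(2*T) - 2 * (inner ℝ Sp x : ℝ) * 2 + 2 * T * ‖x‖ ^ 2 := by
    have : ∑ i, (w i - u i) * ‖p i - x‖ ^ 2
        = ∑ i, ((w i - u i) * ‖p i‖ ^ 2 - 2 * ((w i - u i) * (inner ℝ (p i) x : ℝ))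
            + (w i - u i) * ‖x‖ ^ 2) := by
      refine Finset.sum_congr rfl fun i _ => ?_
      rw [hexp i]; ring
    rw [this, Finset.sum_add_distrib, Finset.sum_sub_distrib, hAsum,
      ← Finset.mul_sum, ← Finset.sum_mul, hTsum]
    have hci : ∑ i, (w i - u i) * (inner ℝ (p i) x : ℝ)
        = 2 * ∑ i, c i * (inner ℝ (p i) x : ℝ) := by
      rw [Finset.mul_sum]
      refine Finset.sum_congr rfl fun i _ => ?_
      rw [hc]; ring
    rw [hci, ← hSpinner]
    ring
  -- RHS value
  have hRHS : ∑ i, w i * ‖p i - x‖ ^ 2 = 1 + ‖x‖ ^ 2 := by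
    have : ∑ i, w i * ‖p i - x‖ ^ 2
        = ∑ i, (w i * ‖p i‖ ^ 2 - 2 * (w i * (inner ℝ (p i) x : ℝ)) + w i * ‖x‖ ^ 2) := by
      refine Finset.sum_congr rfl fun i _ => ?_
      rw [hexp i]; ring
    rw [this, Finset.sum_add_distrib, Finset.sum_sub_distrib, hw3,
      ← Finset.mul_sum, hwinner, ← Finset.sum_mul, hw1]
    ring
  rw [hLHS, hRHS]
  have hip : |(inner ℝ Sp x : ℝ)| ≤ ‖Sp‖ * ‖x‖ := abs_real_inner_le_norm _ _
  have hxnn : (0:ℝ) ≤ ‖x‖ := norm_nonneg x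
  set ip : ℝ := (inner ℝ Sp x : ℝ) with hipdef
  set b : ℝ := ‖x‖ with hb
  have hip2 : |ip| ≤ (ε/4) * b := hip.trans (mul_le_mul_of_nonneg_right hSpb hxnn)
  have h1 := abs_le.mp hTb
  have h2 := abs_le.mp hip2
  rw [abs_le]
  constructor <;> nlinarith [sq_nonneg (1 - b), sq_nonneg (1 + b), hxnn, hε0]
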